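/- For every integer d ≥ 2, the equation -ln(1-β) = (d+1)β/(d+1-dβ) has exactly one solution β in the open interval (0,1). -/

import Mathlib

open Real

/-- For every integer `d ≥ 2`, the equation `-ln(1-β) = (d+1)β/(d+1-dβ)` has exactly one
solution `β` in the open interval `(0,1)`. -/
theorem unique_root_beta (d : ℕ) (hd : 2 ≤ d) :
    ∃! β : ℝ, β ∈ Set.Ioo (0 : ℝ) 1 ∧
      -Real.log (1 - β) = ((d : ℝ) + 1) * β / ((d : ℝ) + 1 - d * β) := by
  have hD : (2:ℝ) ≤ (d:ℝ) := by exact_mod_cast hd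
  set D : ℝ := (d:ℝ) with hDdef
  set f : ℝ → ℝ := fun β => -Real.log (1 - β) - (D + 1) * β / (D + 1 - D * β) with hf
  have hden : ∀ β : ℝ, β ≤ 1 → 0 < D + 1 - D * β := by
    intro β hβ; nlinarith
  -- derivative of f
  have hderiv : ∀ β : ℝ, β < 1 →
      HasDerivAt f (1/(1-β) - (D+1)^2/(D+1 - D*β)^2) β := by
    intro β hβ
    have h1 : (0:ℝ) < 1 - β := by linarith
    have h2 : 0 < D + 1 - D * β := hden β hβ.le
    have hl : HasDerivAt (fun β : ℝ => -Real.log (1 - β)) (1/(1-β)) β := by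
      have hs : HasDerivAt (fun β : ℝ => (1:ℝ) - β) (-1) β := by
        simpa using (hasDerivAt_id β).const_sub (1:ℝ)
      have := (hs.log h1.ne').neg
      exact this.congr_deriv (by ring)
    have hr : HasDerivAt (fun β : ℝ => (D + 1) * β / (D + 1 - D * β))
        ((D+1)^2/(D+1-D*β)^2) β := by
      have hn : HasDerivAt (fun β : ℝ => (D + 1) * β) (D+1) β := by
        simpa using (hasDerivAt_id β).const_mul (D+1)
      have hd' : HasDerivAt (fun β : ℝ => D + 1 - D * β) (-D) β := by
        simpa using ((hasDerivAt_id β).const_mul D).const_sub (D+1)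
      have := hn.div hd' h2.ne'
      exact this.congr_deriv (by ring)
    exact hl.sub hr
  -- sign form of the derivative
  have hsign : ∀ β : ℝ, 0 < β → β < 1 →
      1/(1-β) - (D+1)^2/(D+1 - D*β)^2
        = β * (D^2*β - D^2 + 1) / ((1-β) * (D+1-D*β)^2) := by
    intro β h0 h1
    have h2 : 0 < D + 1 - D * β := hden β h1.le
    have h3 : (0:ℝ) < 1 - β := by linarith
    rw [div_sub_div _ _ h3.ne' (by positivity), div_eq_div_iff (by positivity) (by positivity)]
    ring
  set c : ℝ := 1 - 1/D^2 with hc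
  have hD2 : (0:ℝ) < D^2 := by positivity
  have hc0 : 0 < c := by
    have : 1/D^2 ≤ 1/4 := by
      apply one_div_le_one_div_of_le <;> nlinarith
    simp only [hc]; linarith
  have hc1 : c < 1 := by
    have : 0 < 1/D^2 := by positivity
    simp only [hc]; linarith
  have hcont : ∀ s : Set ℝ, s ⊆ Set.Iio 1 → ContinuousOn f s := by
    intro s hs x hx
    exact (hderiv x (hs hx)).continuousAt.continuousWithinAt
  -- f is strictly decreasing on [0, c]
  have hanti : StrictAntiOn f (Set.Icc 0 c) := by
    apply strictAntiOn_of_deriv_neg (convex_Icc 0 c)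
    · exact hcont _ (fun x hx => lt_of_le_of_lt hx.2 hc1)
    · intro x hx
      rw [interior_Icc] at hx
      have hx1 : x < 1 := hx.2.trans hc1
      rw [(hderiv x hx1).deriv, hsign x hx.1 hx1]
      apply div_neg_of_neg_of_pos
      · have hinv : D^2 * (1/D^2) = 1 := by field_simp
        have h2 := hx.2
        rw [hc] at h2
        have : D^2 * x < D^2 - 1 := by nlinarith [mul_lt_mul_of_pos_left h2 hD2]
        nlinarith [hx.1]
      · have := hden x hx1.le
        have h3 : (0:ℝ) < 1 - x := by linarith
        positivity
  -- f is strictly increasing on [c, 1)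
  have hmono : StrictMonoOn f (Set.Ico c 1) := by
    apply strictMonoOn_of_deriv_pos (convex_Ico c 1)
    · exact hcont _ (fun x hx => hx.2)
    · intro x hx
      rw [interior_Ico] at hx
      have hx0 : 0 < x := hc0.trans hx.1
      rw [(hderiv x hx.2).deriv, hsign x hx0 hx.2]
      apply div_pos
      · have hinv : D^2 * (1/D^2) = 1 := by field_simp
        have h2 := hx.1
        rw [hc] at h2
        have : D^2 - 1 < D^2 * x := by nlinarith [mul_lt_mul_of_pos_left h2 hD2]
        nlinarith
      · have := hden x hx.2.le
        have h3 : (0:ℝ) < 1 - x := by linarith [hx.2]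
        positivity
  have hf0 : f 0 = 0 := by simp [hf]
  have hfc : f c < 0 := by
    have := hanti (Set.left_mem_Icc.2 hc0.le) (Set.right_mem_Icc.2 hc0.le) hc0
    rwa [hf0] at this
  -- the test point β₁ near 1 where f is positive
  set x₁ : ℝ := D^2 + D + 2 with hx₁
  set β₁ : ℝ := 1 - Real.exp (-x₁) with hβ₁
  have hexp : D^2 < Real.exp x₁ := by
    have := Real.add_one_le_exp x₁
    simp only [hx₁] at this ⊢
    nlinarith
  have hβ₁lt1 : β₁ < 1 := by
    have := Real.exp_pos (-x₁)
    simp only [hβ₁]; linarith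
  have hβ₁gtc : c < β₁ := by
    have h1 : Real.exp (-x₁) < 1/D^2 := by
      rw [Real.exp_neg]
      rw [inv_lt_comm₀ (Real.exp_pos x₁) (by positivity)]
      calc (1/D^2)⁻¹ = D^2 := by field_simp
        _ < Real.exp x₁ := hexp
    simp only [hβ₁, hc]; linarith
  have hβ₁pos : 0 < β₁ := hc0.trans hβ₁gtc
  have hfβ₁ : 0 < f β₁ := by
    have hlog : -Real.log (1 - β₁) = x₁ := by
      simp [hβ₁]
    have hd1 : 1 < D + 1 - D * β₁ := by nlinarith
    have hx₁big : D + 1 < x₁ := by simp only [hx₁]; nlinarith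
    have hratio : (D + 1) * β₁ / (D + 1 - D * β₁) < x₁ := by
      rw [div_lt_iff₀ (by linarith)]
      nlinarith
    simp only [hf]
    rw [hlog]
    linarith
  -- existence via IVT
  have hivt := intermediate_value_Icc (le_of_lt hβ₁gtc)
    (hcont _ (fun y hy => lt_of_le_of_lt hy.2 hβ₁lt1))
  have h0mem : (0:ℝ) ∈ Set.Icc (f c) (f β₁) := ⟨hfc.le, hfβ₁.le⟩
  obtain ⟨β₀, hβ₀mem, hfβ₀⟩ := hivt h0mem
  have hβ₀1 : β₀ < 1 := lt_of_le_of_lt hβ₀mem.2 hβ₁lt1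
  have hβ₀c : c < β₀ := by
    rcases lt_or_eq_of_le hβ₀mem.1 with h | h
    · exact h
    · exfalso; rw [← h] at hfβ₀; linarith [hfβ₀ ▸ hfc]
  have hβ₀0 : 0 < β₀ := hc0.trans hβ₀c
  -- any solution in (0,1) is > c
  have key : ∀ γ : ℝ, 0 < γ → γ < 1 → f γ = 0 → c < γ := by
    intro γ h0 h1 hfγ
    by_contra h
    push_neg at h
    have := hanti (Set.left_mem_Icc.2 hc0.le) ⟨h0.le, h⟩ h0
    rw [hf0, hfγ] at this
    exact lt_irrefl 0 this
  refine ⟨β₀, ⟨⟨hβ₀0, hβ₀1⟩, by simpa [hf, sub_eq_zero] using hfβ₀⟩, ?_⟩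
  rintro γ ⟨⟨hγ0, hγ1⟩, hγeq⟩
  have hfγ : f γ = 0 := by simp only [hf]; rw [hγeq]; ring
  have hγc : c < γ := key γ hγ0 hγ1 hfγ
  exact hmono.injOn ⟨hγc.le, hγ1⟩ ⟨hβ₀c.le, hβ₀1⟩ (by rw [hfγ, hfβ₀])
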